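/- arXiv:2402.15520 — 2 statements merged into one kernel-verified Lean document; each statement's English description precedes it below -/
import Mathlib

section
/- Given complex inner product spaces (X₁, ⟨·,·⟩₁) and (X₂, ⟨·,·⟩₂), the formula ⟨x, w⟩_X = e₁⟨x₁, w₁⟩₁ + e₂⟨x₂, w₂⟩₂ defines a bicomplex inner product on the 𝔹ℂ-module X = e₁X₁ ⊕ e₂X₂ (i.e., it is additive, 𝔹ℂ-homogeneous in the first argument, *-conjugate symmetric, and positive). -/
/- Bicomplex numbers in idempotent representation: 𝔹ℂ ≅ ℂ × ℂ (componentwise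
   ring operations), with e₁ = (1,0), e₂ = (0,1) and *-conjugation acting as
   componentwise complex conjugation. -/

/-- The idempotent e₁ in the idempotent representation. -/
def eOne : ℂ × ℂ := (1, 0)

/-- The idempotent e₂ in the idempotent representation. -/
def eTwo : ℂ × ℂ := (0, 1)

/-- The nonnegative hyperbolic numbers 𝔻⁺ = {a₁e₁ + a₂e₂ : a₁, a₂ ≥ 0}. -/
def DPos : Set (ℂ × ℂ) :=
  {h | ∃ a₁ a₂ : ℝ, 0 ≤ a₁ ∧ 0 ≤ a₂ ∧ h = ((a₁ : ℂ), (a₂ : ℂ))}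

/- A 𝔹ℂ-module X = e₁X₁ ⊕ e₂X₂ with componentwise scalar action
   (α₁e₁ + α₂e₂)·(e₁x₁ + e₂x₂) = e₁(α₁x₁) + e₂(α₂x₂). -/
variable {H₁ H₂ : Type*}

instance bcSMul [AddCommGroup H₁] [AddCommGroup H₂] [Module ℂ H₁] [Module ℂ H₂] :
    SMul (ℂ × ℂ) (H₁ × H₂) := ⟨fun α x => (α.1 • x.1, α.2 • x.2)⟩

instance bcModule [AddCommGroup H₁] [AddCommGroup H₂] [Module ℂ H₁] [Module ℂ H₂] :
    Module (ℂ × ℂ) (H₁ × H₂) where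
  one_smul x := by show ((1:ℂ) • x.1, (1:ℂ) • x.2) = x; simp
  mul_smul a b x := by
    show ((a.1*b.1) • x.1, (a.2*b.2) • x.2) = ((a.1 • (b.1 • x.1), a.2 • (b.2 • x.2)) : H₁ × H₂)
    simp [mul_smul]
  smul_add a x y := by
    show (a.1 • (x.1+y.1), a.2 • (x.2+y.2)) = ((a.1 • x.1 + a.1 • y.1, a.2 • x.2 + a.2 • y.2) : H₁ × H₂)
    simp [smul_add]
  smul_zero a := by show (a.1 • (0:H₁), a.2 • (0:H₂)) = 0; simp
  add_smul a b x := by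
    show ((a.1+b.1) • x.1, (a.2+b.2) • x.2) = ((a.1 • x.1 + b.1 • x.1, a.2 • x.2 + b.2 • x.2) : H₁ × H₂)
    simp [add_smul]
  zero_smul x := by show ((0:ℂ) • x.1, (0:ℂ) • x.2) = 0; simp

/-- Given complex inner product spaces (X₁,⟨·,·⟩₁), (X₂,⟨·,·⟩₂), the formula
    ⟨x,w⟩ = e₁⟨x₁,w₁⟩₁ + e₂⟨x₂,w₂⟩₂ defines a bicomplex inner product on
    X = e₁X₁ ⊕ e₂X₂: additive and 𝔹ℂ-homogeneous in the first argument,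
    *-conjugate symmetric, and positive.  (⟨·,·⟩ᵢ is taken linear in its
    first argument, following the paper's convention.) -/
theorem stmt9 [NormedAddCommGroup H₁] [InnerProductSpace ℂ H₁]
    [NormedAddCommGroup H₂] [InnerProductSpace ℂ H₂]
    (inn : H₁ × H₂ → H₁ × H₂ → ℂ × ℂ)
    (hdefn : ∀ x w : H₁ × H₂, inn x w = ((inner ℂ w.1 x.1 : ℂ), (inner ℂ w.2 x.2 : ℂ))) :
    (∀ x y z : H₁ × H₂, inn (x + y) z = inn x z + inn y z) ∧
    (∀ (α : ℂ × ℂ) (x y : H₁ × H₂), inn (α • x) y = α * inn x y) ∧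
    (∀ x y : H₁ × H₂, inn x y = star (inn y x)) ∧
    (∀ x : H₁ × H₂, inn x x ∈ DPos) ∧
    (∀ x : H₁ × H₂, inn x x = 0 ↔ x = 0) := by
  refine ⟨?_, ?_, ?_, ?_, ?_⟩
  · intro x y z; simp [hdefn, inner_add_right, Prod.ext_iff]
  · intro α x y
    simp only [hdefn]
    show ((inner ℂ y.1 (α.1 • x.1) : ℂ), (inner ℂ y.2 (α.2 • x.2) : ℂ)) = _
    simp [inner_smul_right, Prod.ext_iff]
  · intro x y
    simp only [hdefn, Prod.star_def]
    exact Prod.ext (inner_conj_symm y.1 x.1).symm (inner_conj_symm y.2 x.2).symm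
  · intro x
    refine ⟨‖x.1‖^2, ‖x.2‖^2, by positivity, by positivity, ?_⟩
    simp [hdefn, inner_self_eq_norm_sq_to_K]
  · intro x
    simp [hdefn, Prod.ext_iff, inner_self_eq_zero]
end

section
/- If X₁ and X₂ are complex Hilbert spaces, then X = e₁X₁ ⊕ e₂X₂ with inner product ⟨x, w⟩ = e₁⟨x₁, w₁⟩₁ + e₂⟨x₂, w₂⟩₂ is complete with respect to the real-valued norm ‖x‖²_X = (‖x₁‖₁² + ‖x₂‖₂²)/2, i.e., X is a bicomplex Hilbert module. -/
/- A 𝔹ℂ-module X = e₁X₁ ⊕ e₂X₂ with componentwise scalar action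
   (α₁e₁ + α₂e₂)·(e₁x₁ + e₂x₂) = e₁(α₁x₁) + e₂(α₂x₂). -/
variable {H₁ H₂ : Type*}

open Filter Topology

/-- If X₁ and X₂ are complex Hilbert spaces then X = e₁X₁ ⊕ e₂X₂, with inner
    product ⟨x,w⟩ = e₁⟨x₁,w₁⟩₁ + e₂⟨x₂,w₂⟩₂, is complete with respect to the
    real valued norm ‖x‖²_X = (‖x₁‖₁² + ‖x₂‖₂²)/2: every Cauchy sequence for
    this norm converges, i.e. X is a bicomplex Hilbert module. -/
theorem stmt12 [NormedAddCommGroup H₁] [InnerProductSpace ℂ H₁] [CompleteSpace H₁]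
    [NormedAddCommGroup H₂] [InnerProductSpace ℂ H₂] [CompleteSpace H₂]
    (normX : H₁ × H₂ → ℝ)
    (hnorm : ∀ y : H₁ × H₂, normX y = Real.sqrt ((‖y.1‖ ^ 2 + ‖y.2‖ ^ 2) / 2)) :
    ∀ f : ℕ → H₁ × H₂,
      (∀ ε : ℝ, 0 < ε → ∃ N : ℕ, ∀ m ≥ N, ∀ n ≥ N, normX (f m - f n) < ε) →
      ∃ l : H₁ × H₂, Tendsto (fun n => normX (f n - l)) atTop (𝓝 0) := by
  intro f hf
  -- component norms are controlled by normX
  have key : ∀ (a : H₁) (b : H₂),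
      ‖a‖ ≤ 2 * Real.sqrt ((‖a‖ ^ 2 + ‖b‖ ^ 2) / 2) ∧
      ‖b‖ ≤ 2 * Real.sqrt ((‖a‖ ^ 2 + ‖b‖ ^ 2) / 2) := by
    intro a b
    set s : ℝ := (‖a‖ ^ 2 + ‖b‖ ^ 2) / 2 with hs
    have hs0 : 0 ≤ s := by positivity
    have h4 : Real.sqrt (4 * s) = 2 * Real.sqrt s := by
      rw [show (4 : ℝ) = 2 ^ 2 by norm_num, Real.sqrt_mul (by positivity), Real.sqrt_sq (by norm_num : (0:ℝ) ≤ 2)]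
    constructor
    · have : ‖a‖ = Real.sqrt (‖a‖ ^ 2) := (Real.sqrt_sq (norm_nonneg _)).symm
      rw [this, ← h4]
      apply Real.sqrt_le_sqrt
      nlinarith [sq_nonneg ‖b‖]
    · have : ‖b‖ = Real.sqrt (‖b‖ ^ 2) := (Real.sqrt_sq (norm_nonneg _)).symm
      rw [this, ← h4]
      apply Real.sqrt_le_sqrt
      nlinarith [sq_nonneg ‖a‖]
  have c1 : CauchySeq (fun n => (f n).1) := by
    rw [Metric.cauchySeq_iff]
    intro ε hε
    obtain ⟨N, hN⟩ := hf (ε / 2) (by linarith)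
    refine ⟨N, fun m hm n hn => ?_⟩
    have h := hN m hm n hn
    rw [hnorm] at h
    have hk := (key (f m - f n).1 (f m - f n).2).1
    have : dist (f m).1 (f n).1 = ‖(f m - f n).1‖ := by
      rw [dist_eq_norm]; rfl
    rw [this]
    linarith
  have c2 : CauchySeq (fun n => (f n).2) := by
    rw [Metric.cauchySeq_iff]
    intro ε hε
    obtain ⟨N, hN⟩ := hf (ε / 2) (by linarith)
    refine ⟨N, fun m hm n hn => ?_⟩
    have h := hN m hm n hn
    rw [hnorm] at h
    have hk := (key (f m - f n).1 (f m - f n).2).2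
    have : dist (f m).2 (f n).2 = ‖(f m - f n).2‖ := by
      rw [dist_eq_norm]; rfl
    rw [this]
    linarith
  obtain ⟨l₁, hl₁⟩ := cauchySeq_tendsto_of_complete c1
  obtain ⟨l₂, hl₂⟩ := cauchySeq_tendsto_of_complete c2
  refine ⟨(l₁, l₂), ?_⟩
  have h1 : Tendsto (fun n => ‖(f n - (l₁, l₂)).1‖) atTop (𝓝 0) := by
    have := (tendsto_sub_nhds_zero_iff.mpr hl₁).norm
    simpa using this
  have h2 : Tendsto (fun n => ‖(f n - (l₁, l₂)).2‖) atTop (𝓝 0) := by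
    have := (tendsto_sub_nhds_zero_iff.mpr hl₂).norm
    simpa using this
  have : Tendsto (fun n => Real.sqrt ((‖(f n - (l₁, l₂)).1‖ ^ 2 + ‖(f n - (l₁, l₂)).2‖ ^ 2) / 2))
      atTop (𝓝 0) := by
    have := (((h1.pow 2).add (h2.pow 2)).div_const 2).sqrt
    simpa using this
  simpa only [hnorm] using this
end
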